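/- For every m ≥ 1, the number of 321-avoiding involutions π of {1,…,2m} with π(1) ≠ 1 equals the number of 321-avoiding involutions π of {1,…,2m} with π(1) = 1. -/

import Mathlib

/-- A permutation of `Fin n` avoids the pattern 321 if there are no indices
`i < j < k` with `π i > π j > π k`. -/
def Avoids321 {n : ℕ} (π : Equiv.Perm (Fin n)) : Prop :=
  ¬ ∃ i j k : Fin n, i < j ∧ j < k ∧ π k < π j ∧ π j < π i

/-- A permutation is an involution if it is its own inverse pointwise. -/
def IsInvolution {n : ℕ} (π : Equiv.Perm (Fin n)) : Prop :=
  ∀ i, π (π i) = i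

/-- A finset of `Fin n` consists of consecutive integers iff it is order-convex. -/
def IsConsecutive {n : ℕ} (I : Finset (Fin n)) : Prop :=
  ∀ x ∈ I, ∀ y ∈ I, ∀ z : Fin n, x ≤ z → z ≤ y → z ∈ I

/-- A permutation is simple if every interval (a set of consecutive integers whose
image is also a set of consecutive integers) has cardinality at most 1 or `n`. -/
def IsSimplePerm {n : ℕ} (π : Equiv.Perm (Fin n)) : Prop :=
  ∀ I : Finset (Fin n), IsConsecutive I → IsConsecutive (I.image π) →
    I.card ≤ 1 ∨ I.card = n

/-- A permutation of `{1,…,n}` (here 0-indexed on `Fin n`) is sum-decomposable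
(of type 12) if it maps some proper nonempty initial segment onto itself. -/
def SumDecomposable {n : ℕ} (π : Equiv.Perm (Fin n)) : Prop :=
  ∃ k : ℕ, 1 ≤ k ∧ k < n ∧
    (π : Fin n → Fin n) '' {i : Fin n | (i : ℕ) < k} = {i : Fin n | (i : ℕ) < k}

/-- A permutation is skew-decomposable (of type 21) if it maps some proper nonempty
initial segment onto the corresponding final segment. -/
def SkewDecomposable {n : ℕ} (π : Equiv.Perm (Fin n)) : Prop :=
  ∃ k : ℕ, 1 ≤ k ∧ k < n ∧
    (π : Fin n → Fin n) '' {i : Fin n | (i : ℕ) < k} = {i : Fin n | n - k ≤ (i : ℕ)}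

open Finset

namespace I321
open scoped Classical

variable {n : ℕ}

noncomputable def below (s : Finset (Fin n)) (p : ℕ) : ℕ := (s.filter (fun i => i.val < p)).card

noncomputable def Tset (w : Fin n → Bool) : Finset (Fin n) := univ.filter (fun i => w i = true)
noncomputable def Dset (w : Fin n → Bool) : Finset (Fin n) := univ.filter (fun i => w i = false)

noncomputable def ht (w : Fin n → Bool) (p : ℕ) : ℤ :=
  (below (Tset w) p : ℤ) - below (Dset w) p

def Ballot (w : Fin n → Bool) : Prop := ∀ p, 0 ≤ ht w p

def fixedPt (w : Fin n → Bool) (u : Fin n) : Prop :=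
  w u = true ∧ ∀ q, q ≤ n → u.val < q → ht w u.val < ht w q

noncomputable def Fx (w : Fin n → Bool) : Finset (Fin n) := univ.filter (fun u => fixedPt w u)
noncomputable def Aset (w : Fin n → Bool) : Finset (Fin n) :=
  univ.filter (fun u => w u = true ∧ ¬ fixedPt w u)

lemma below_zero (s : Finset (Fin n)) : below s 0 = 0 := by
  simp [below]

lemma below_succ (s : Finset (Fin n)) {p : ℕ} (h : p < n) :
    below s (p + 1) = below s p + (if (⟨p, h⟩ : Fin n) ∈ s then 1 else 0) := by
  classical
  unfold below
  have : s.filter (fun i => i.val < p + 1) =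
      (s.filter (fun i => i.val < p)) ∪ (s.filter (fun i => i = ⟨p, h⟩)) := by
    ext x
    simp only [mem_filter, mem_union]
    constructor
    · rintro ⟨hx, hlt⟩
      rcases Nat.lt_succ_iff_lt_or_eq.mp hlt with h' | h'
      · exact Or.inl ⟨hx, h'⟩
      · exact Or.inr ⟨hx, Fin.ext h'⟩
    · rintro (⟨hx, hlt⟩ | ⟨hx, rfl⟩)
      · exact ⟨hx, Nat.lt_succ_of_lt hlt⟩
      · exact ⟨hx, Nat.lt_succ_self _⟩
  rw [this, card_union_of_disjoint]
  · congr 1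
    by_cases hp : (⟨p, h⟩ : Fin n) ∈ s
    · rw [if_pos hp]
      rw [filter_eq']
      simp [hp]
    · rw [if_neg hp, filter_eq']
      simp [hp]
  · rw [disjoint_left]
    rintro x hx hx'
    simp only [mem_filter] at hx hx'
    obtain ⟨hx1, hx2⟩ := hx
    obtain ⟨hx1', rfl⟩ := hx'
    exact absurd hx2 (by simp)

lemma below_of_ge (s : Finset (Fin n)) {p : ℕ} (h : n ≤ p) : below s p = s.card := by
  unfold below
  congr 1
  apply filter_true_of_mem
  intro x _
  exact lt_of_lt_of_le x.isLt h

lemma below_mono (s : Finset (Fin n)) {p q : ℕ} (h : p ≤ q) : below s p ≤ below s q := by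
  apply card_le_card
  intro x hx
  simp only [below, mem_filter] at hx ⊢
  exact ⟨hx.1, lt_of_lt_of_le hx.2 h⟩

variable {w : Fin n → Bool}

lemma mem_Tset {i : Fin n} : i ∈ Tset w ↔ w i = true := by simp [Tset]
lemma mem_Dset {i : Fin n} : i ∈ Dset w ↔ w i = false := by simp [Dset]



lemma ht_succ_true {p : ℕ} (h : p < n) (hw : w ⟨p, h⟩ = true) :
    ht w (p + 1) = ht w p + 1 := by
  unfold ht
  rw [below_succ (Tset w) h, below_succ (Dset w) h, if_pos (mem_Tset.mpr hw),
    if_neg (by simp [mem_Dset, hw])]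
  push_cast
  ring

lemma ht_succ_false {p : ℕ} (h : p < n) (hw : w ⟨p, h⟩ = false) :
    ht w (p + 1) = ht w p - 1 := by
  unfold ht
  rw [below_succ (Tset w) h, below_succ (Dset w) h, if_neg (by simp [mem_Tset, hw]),
    if_pos (mem_Dset.mpr hw)]
  push_cast
  ring

lemma ht_zero : ht w 0 = 0 := by simp [ht, below]

lemma ht_of_ge {p : ℕ} (h : n ≤ p) : ht w p = ht w n := by
  unfold ht
  rw [below_of_ge _ h, below_of_ge _ le_rfl, below_of_ge _ h, below_of_ge _ le_rfl]

noncomputable def mn (w : Fin n → Bool) (p : ℕ) : ℤ :=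
  (insert n (Finset.Icc p n)).inf' (insert_nonempty _ _) (ht w)

lemma mn_eq_inf {p : ℕ} (h : p ≤ n) :
    mn w p = (Finset.Icc p n).inf' ⟨n, by simp [h]⟩ (ht w) := by
  unfold mn
  congr 1
  rw [insert_eq_self]
  simp [h]

lemma mn_le {p q : ℕ} (h : p ≤ q) (h' : q ≤ n) : mn w p ≤ ht w q := by
  rw [mn_eq_inf (le_trans h h')]
  exact inf'_le _ (by simp [h, h'])

lemma mn_exists {p : ℕ} (h : p ≤ n) : ∃ q, p ≤ q ∧ q ≤ n ∧ ht w q = mn w p := by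
  rw [mn_eq_inf h]
  obtain ⟨q, hq, hq'⟩ := exists_mem_eq_inf' (⟨n, by simp [h]⟩ : (Finset.Icc p n).Nonempty) (ht w)
  exact ⟨q, (mem_Icc.mp hq).1, (mem_Icc.mp hq).2, hq'.symm⟩

lemma mn_n : mn w n = ht w n := by
  rw [mn_eq_inf le_rfl]
  simp [Finset.Icc_self]

lemma mn_rec {p : ℕ} (h : p < n) : mn w p = min (ht w p) (mn w (p + 1)) := by
  apply le_antisymm
  · apply le_min (mn_le le_rfl h.le)
    obtain ⟨q, hq1, hq2, hq3⟩ := mn_exists (w := w) (p := p+1) h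
    rw [← hq3]
    exact mn_le (le_trans (Nat.le_succ p) hq1) hq2
  · obtain ⟨q, hq1, hq2, hq3⟩ := mn_exists (w := w) (p := p) h.le
    rw [← hq3]
    rcases Nat.eq_or_lt_of_le hq1 with rfl | hlt
    · exact min_le_left _ _
    · exact le_trans (min_le_right _ _) (mn_le hlt hq2)

lemma mem_Fx {u : Fin n} : u ∈ Fx w ↔ fixedPt w u := by simp [Fx]
lemma mem_Aset {u : Fin n} : u ∈ Aset w ↔ w u = true ∧ ¬ fixedPt w u := by simp [Aset]

lemma lemmaM (hb : Ballot w) : ∀ p, p ≤ n → (below (Fx w) p : ℤ) = mn w p := by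
  intro p
  induction p with
  | zero =>
    intro _
    rw [below_zero]
    apply le_antisymm
    · obtain ⟨q, _, _, hq3⟩ := mn_exists (w := w) (Nat.zero_le n)
      rw [← hq3]
      exact_mod_cast hb q
    · simpa using mn_le (w := w) le_rfl (Nat.zero_le n) |>.trans_eq ht_zero
  | succ p ih =>
    intro hpn
    have hp : p < n := hpn
    have IH := ih hp.le
    have hrec := mn_rec (w := w) hp
    rcases lt_or_ge (ht w p) (mn w (p+1)) with hc | hc
    · -- p is a fixed point
      have hwp : w ⟨p, hp⟩ = true := by
        by_contra hf
        have hf' : w ⟨p, hp⟩ = false := by simpa using hf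
        have h1 : ht w (p+1) = ht w p - 1 := ht_succ_false hp hf'
        have h2 : mn w (p+1) ≤ ht w (p+1) := mn_le le_rfl hpn
        omega
      have hfx : fixedPt w ⟨p, hp⟩ := by
        refine ⟨hwp, fun q hq hq' => ?_⟩
        calc ht w p < mn w (p+1) := hc
        _ ≤ ht w q := mn_le hq' hq
      have hmem : (⟨p, hp⟩ : Fin n) ∈ Fx w := mem_Fx.mpr hfx
      have h1 : ht w (p+1) = ht w p + 1 := ht_succ_true hp hwp
      have h2 : mn w (p+1) ≤ ht w (p+1) := mn_le le_rfl hpn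
      have hmn : mn w (p+1) = ht w p + 1 := by omega
      rw [below_succ _ hp, if_pos hmem]
      push_cast
      rw [IH, hrec]
      omega
    · have hnotfx : (⟨p, hp⟩ : Fin n) ∉ Fx w := by
        rw [mem_Fx]
        rintro ⟨-, hall⟩
        obtain ⟨q, hq1, hq2, hq3⟩ := mn_exists (w := w) (p := p+1) hp
        have h4 : ht w p < ht w q := hall q hq2 hq1
        omega
      rw [below_succ _ hp, if_neg hnotfx]
      push_cast
      rw [IH, hrec]
      omega

lemma below_partition (w : Fin n → Bool) (p : ℕ) :
    below (Tset w) p = below (Aset w) p + below (Fx w) p := by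
  unfold below
  rw [← card_union_of_disjoint]
  · congr 1
    ext x
    simp only [mem_filter, mem_union, mem_Tset, mem_Aset, mem_Fx]
    constructor
    · rintro ⟨hx, hlt⟩
      by_cases hfx : fixedPt w x
      · exact Or.inr ⟨hfx, hlt⟩
      · exact Or.inl ⟨⟨hx, hfx⟩, hlt⟩
    · rintro (⟨⟨h1, _⟩, hlt⟩ | ⟨hfx, hlt⟩)
      · exact ⟨h1, hlt⟩
      · exact ⟨hfx.1, hlt⟩
  · rw [disjoint_left]
    intro x hx hx'
    simp only [mem_filter, mem_Aset, mem_Fx] at hx hx'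
    exact hx.1.2 hx'.1

lemma mn_eq_ht_of_fixed {u : Fin n} (hu : fixedPt w u) : mn w u.val = ht w u.val := by
  apply le_antisymm (mn_le le_rfl u.isLt.le)
  obtain ⟨q, hq1, hq2, hq3⟩ := mn_exists (w := w) (p := u.val) u.isLt.le
  rw [← hq3]
  rcases Nat.eq_or_lt_of_le hq1 with rfl | hlt
  · exact le_rfl
  · exact (hu.2 q hq2 hlt).le

lemma C1 (hb : Ballot w) {u : Fin n} (hu : fixedPt w u) :
    (below (Aset w) u.val : ℤ) = below (Dset w) u.val := by
  have hM := lemmaM hb u.val u.isLt.le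
  have hpart := below_partition w u.val
  have hht : ht w u.val = (below (Tset w) u.val : ℤ) - below (Dset w) u.val := rfl
  rw [mn_eq_ht_of_fixed hu] at hM
  omega

lemma C2 (hb : Ballot w) {u : Fin n} (hu : w u = false) :
    (below (Dset w) u.val : ℤ) + 1 ≤ below (Aset w) u.val := by
  have hM := lemmaM hb u.val u.isLt.le
  have hpart := below_partition w u.val
  have hht : ht w u.val = (below (Tset w) u.val : ℤ) - below (Dset w) u.val := rfl
  have h1 : ht w (u.val + 1) = ht w u.val - 1 := ht_succ_false u.isLt (by simpa using hu)
  have h2 : mn w u.val ≤ ht w (u.val + 1) := mn_le (Nat.le_succ _) u.isLt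
  omega

lemma C3 (hb : Ballot w) : (Aset w).card = (Dset w).card := by
  have hM := lemmaM hb n le_rfl
  have hpart := below_partition w n
  have hht : ht w n = (below (Tset w) n : ℤ) - below (Dset w) n := rfl
  rw [mn_n] at hM
  have hA : below (Aset w) n = (Aset w).card := below_of_ge _ le_rfl
  have hD : below (Dset w) n = (Dset w).card := below_of_ge _ le_rfl
  omega



-- counting elements of s below the j-th element of s
lemma below_orderEmb (s : Finset (Fin n)) {k : ℕ} (h : s.card = k) (j : Fin k) :
    below s ((s.orderEmbOfFin h j).val) = j := by
  unfold below
  have himg : s.filter (fun i => i.val < (s.orderEmbOfFin h j).val) =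
      (Finset.Iio j).image (s.orderEmbOfFin h) := by
    ext x
    simp only [mem_filter, mem_image, mem_Iio]
    constructor
    · rintro ⟨hxs, hxlt⟩
      have : x ∈ Set.range (s.orderEmbOfFin h) := by
        rw [range_orderEmbOfFin]; exact hxs
      obtain ⟨i, rfl⟩ := this
      refine ⟨i, ?_, rfl⟩
      have : s.orderEmbOfFin h i < s.orderEmbOfFin h j := hxlt
      exact (s.orderEmbOfFin h).strictMono.lt_iff_lt.mp this
    · rintro ⟨i, hij, rfl⟩
      exact ⟨orderEmbOfFin_mem s h i, (s.orderEmbOfFin h).strictMono hij⟩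
  rw [himg, Finset.card_image_of_injective _ (s.orderEmbOfFin h).injective, Fin.card_Iio]

lemma below_le_of_le_orderEmb (s : Finset (Fin n)) {k : ℕ} (h : s.card = k) (j : Fin k)
    {p : ℕ} (hp : p ≤ (s.orderEmbOfFin h j).val) : below s p ≤ j :=
  le_trans (below_mono _ hp) (le_of_eq (below_orderEmb s h j))

lemma orderEmb_lt_of_lt_below (s : Finset (Fin n)) {k : ℕ} (h : s.card = k) (j : Fin k)
    {p : ℕ} (hp : (j : ℕ) < below s p) : ((s.orderEmbOfFin h j).val) < p := by
  by_contra hc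
  exact absurd (below_le_of_le_orderEmb s h j (not_lt.mp hc)) (not_le.mpr hp)

lemma disj_AD : ∀ x, ¬ (x ∈ Aset w ∧ x ∈ Dset w) := by
  rintro x ⟨hA, hD⟩
  rw [mem_Aset] at hA
  rw [mem_Dset] at hD
  simp [hD] at hA

noncomputable def decFun (w : Fin n → Bool) (hb : Ballot w) : Fin n → Fin n := fun x =>
  if hx : x ∈ Aset w then (Dset w).orderEmbOfFin rfl (((Aset w).orderIsoOfFin (C3 hb)).symm ⟨x, hx⟩)
  else if hx : x ∈ Dset w then (Aset w).orderEmbOfFin (C3 hb) (((Dset w).orderIsoOfFin rfl).symm ⟨x, hx⟩)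
  else x

lemma iso_symm_emb (s : Finset (Fin n)) {k : ℕ} (h : s.card = k) (j : Fin k)
    (hm : s.orderEmbOfFin h j ∈ s) :
    (s.orderIsoOfFin h).symm ⟨s.orderEmbOfFin h j, hm⟩ = j := by
  have : (⟨s.orderEmbOfFin h j, hm⟩ : {x // x ∈ s}) = s.orderIsoOfFin h j :=
    Subtype.ext (coe_orderIsoOfFin_apply s h j).symm
  rw [this, OrderIso.symm_apply_apply]

lemma decFun_eA (hb : Ballot w) (j : Fin (Dset w).card) :
    decFun w hb ((Aset w).orderEmbOfFin (C3 hb) j) = (Dset w).orderEmbOfFin rfl j := by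
  unfold decFun
  rw [dif_pos (orderEmbOfFin_mem _ _ j)]
  rw [iso_symm_emb]

lemma decFun_eD (hb : Ballot w) (j : Fin (Dset w).card) :
    decFun w hb ((Dset w).orderEmbOfFin rfl j) = (Aset w).orderEmbOfFin (C3 hb) j := by
  unfold decFun
  rw [dif_neg, dif_pos (orderEmbOfFin_mem _ _ j)]
  · rw [iso_symm_emb]
  · intro hA
    exact disj_AD _ ⟨hA, orderEmbOfFin_mem _ _ j⟩

lemma decFun_fix (hb : Ballot w) {x : Fin n} (hA : x ∉ Aset w) (hD : x ∉ Dset w) :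
    decFun w hb x = x := by
  unfold decFun
  rw [dif_neg hA, dif_neg hD]

lemma decFun_invol (hb : Ballot w) : Function.Involutive (decFun w hb) := by
  intro x
  by_cases hA : x ∈ Aset w
  · obtain ⟨j, hj⟩ : ∃ j, (Aset w).orderEmbOfFin (C3 hb) j = x := by
      have : x ∈ Set.range ((Aset w).orderEmbOfFin (C3 hb)) := by
        rw [range_orderEmbOfFin]; exact hA
      exact this
    rw [← hj, decFun_eA hb j, decFun_eD hb j]
  · by_cases hD : x ∈ Dset w
    · obtain ⟨j, hj⟩ : ∃ j, (Dset w).orderEmbOfFin rfl j = x := by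
        have : x ∈ Set.range ((Dset w).orderEmbOfFin rfl) := by
          rw [range_orderEmbOfFin]; exact hD
        exact this
      rw [← hj, decFun_eD hb j, decFun_eA hb j]
    · rw [decFun_fix hb hA hD, decFun_fix hb hA hD]

noncomputable def dec (w : Fin n → Bool) (hb : Ballot w) : Equiv.Perm (Fin n) :=
  (decFun_invol hb).toPerm


lemma lt_below_of_orderEmb_lt (s : Finset (Fin n)) {k : ℕ} (h : s.card = k) (j : Fin k)
    {p : ℕ} (hp : (s.orderEmbOfFin h j).val < p) : (j : ℕ) < below s p := by
  have h1 : (Finset.Iic j).image (s.orderEmbOfFin h) ⊆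
      s.filter (fun i => i.val < p) := by
    intro x hx
    simp only [mem_image, mem_Iic] at hx
    obtain ⟨i, hij, rfl⟩ := hx
    refine mem_filter.mpr ⟨orderEmbOfFin_mem s h i, ?_⟩
    have : s.orderEmbOfFin h i ≤ s.orderEmbOfFin h j :=
      (s.orderEmbOfFin h).monotone hij
    exact lt_of_le_of_lt this hp
  have h2 := card_le_card h1
  rw [Finset.card_image_of_injective _ (s.orderEmbOfFin h).injective, Fin.card_Iic] at h2
  exact h2

-- a_j < b_j
lemma eA_lt_eD (hb : Ballot w) (j : Fin (Dset w).card) :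
    (Aset w).orderEmbOfFin (C3 hb) j < (Dset w).orderEmbOfFin rfl j := by
  set b := (Dset w).orderEmbOfFin rfl j with hbdef
  have hbD : b ∈ Dset w := orderEmbOfFin_mem _ _ j
  have hDb : below (Dset w) b.val = j := below_orderEmb _ rfl j
  have hC2 := C2 hb (mem_Dset.mp hbD)
  have hlt : (j : ℕ) < below (Aset w) b.val := by omega
  exact orderEmb_lt_of_lt_below _ _ _ hlt

-- arcs do not straddle fixed points
lemma eD_lt_of_fixed (hb : Ballot w) {u : Fin n} (hu : fixedPt w u)
    (j : Fin (Dset w).card) (hj : (Aset w).orderEmbOfFin (C3 hb) j < u) :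
    (Dset w).orderEmbOfFin rfl j < u := by
  have hC1 := C1 hb hu
  have h1 : (j : ℕ) < below (Aset w) u.val := lt_below_of_orderEmb_lt _ _ _ hj
  have h2 : (j : ℕ) < below (Dset w) u.val := by omega
  exact orderEmb_lt_of_lt_below _ _ _ h2

lemma avoids_of_two_inc (π : Equiv.Perm (Fin n))
    (hT : ∀ x y : Fin n, x < y → x ≤ π x → y ≤ π y → π x < π y)
    (hD : ∀ x y : Fin n, x < y → π x < x → π y < y → π x < π y) :
    Avoids321 π := by
  rintro ⟨i, j, k, hij, hjk, h1, h2⟩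
  by_cases hwi : i ≤ π i
  · by_cases hwj : j ≤ π j
    · exact absurd (hT i j hij hwi hwj) (not_lt.mpr h2.le)
    · by_cases hwk : k ≤ π k
      · exact absurd (hT i k (hij.trans hjk) hwi hwk) (not_lt.mpr (h1.trans h2).le)
      · exact absurd (hD j k hjk (not_le.mp hwj) (not_le.mp hwk)) (not_lt.mpr h1.le)
  · by_cases hwj : j ≤ π j
    · by_cases hwk : k ≤ π k
      · exact absurd (hT j k hjk hwj hwk) (not_lt.mpr h1.le)
      · exact absurd (hD i k (hij.trans hjk) (not_le.mp hwi) (not_le.mp hwk))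
          (not_lt.mpr (h1.trans h2).le)
    · exact absurd (hD i j hij (not_le.mp hwi) (not_le.mp hwj)) (not_lt.mpr h2.le)

variable {hb : Ballot w}

lemma dec_apply (hb : Ballot w) (x : Fin n) : dec w hb x = decFun w hb x := rfl

lemma exists_eA {x : Fin n} (hb : Ballot w) (hx : x ∈ Aset w) :
    ∃ j, (Aset w).orderEmbOfFin (C3 hb) j = x := by
  have : x ∈ Set.range ((Aset w).orderEmbOfFin (C3 hb)) := by
    rw [range_orderEmbOfFin]; exact hx
  exact this

lemma exists_eD {x : Fin n} (hx : x ∈ Dset w) :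
    ∃ j, (Dset w).orderEmbOfFin rfl j = x := by
  have : x ∈ Set.range ((Dset w).orderEmbOfFin rfl) := by
    rw [range_orderEmbOfFin]; exact hx
  exact this

lemma decFun_lt_iff (hb : Ballot w) (x : Fin n) : decFun w hb x < x ↔ x ∈ Dset w := by
  constructor
  · intro hlt
    by_contra hD
    by_cases hA : x ∈ Aset w
    · obtain ⟨j, rfl⟩ := exists_eA hb hA
      rw [decFun_eA hb j] at hlt
      exact absurd (eA_lt_eD hb j) (not_lt.mpr hlt.le)
    · rw [decFun_fix hb hA hD] at hlt
      exact lt_irrefl _ hlt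
  · intro hD
    obtain ⟨j, rfl⟩ := exists_eD hD
    rw [decFun_eD hb j]
    exact eA_lt_eD hb j

lemma fixedPt_of_not_mem {x : Fin n} (hA : x ∉ Aset w) (hD : x ∉ Dset w) : fixedPt w x := by
  have hT : w x = true := by
    cases hw : w x
    · exact absurd (mem_Dset.mpr hw) hD
    · rfl
  by_contra hfx
  exact hA (mem_Aset.mpr ⟨hT, hfx⟩)

lemma dec_isInvolution (hb : Ballot w) : IsInvolution (dec w hb) := fun i => decFun_invol hb i

lemma dec_avoids (hb : Ballot w) : Avoids321 (dec w hb) := by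
  apply avoids_of_two_inc
  · intro x y hxy hx hy
    simp only [dec_apply] at hx hy ⊢
    have hxD : x ∉ Dset w := fun h => absurd ((decFun_lt_iff hb x).mpr h) (not_lt.mpr hx)
    have hyD : y ∉ Dset w := fun h => absurd ((decFun_lt_iff hb y).mpr h) (not_lt.mpr hy)
    by_cases hxA : x ∈ Aset w
    · obtain ⟨i, rfl⟩ := exists_eA hb hxA
      rw [decFun_eA hb i]
      by_cases hyA : y ∈ Aset w
      · obtain ⟨j, rfl⟩ := exists_eA hb hyA
        rw [decFun_eA hb j]
        have hij : i < j := ((Aset w).orderEmbOfFin (C3 hb)).strictMono.lt_iff_lt.mp hxy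
        exact ((Dset w).orderEmbOfFin rfl).strictMono hij
      · rw [decFun_fix hb hyA hyD]
        exact eD_lt_of_fixed hb (fixedPt_of_not_mem hyA hyD) i hxy
    · rw [decFun_fix hb hxA hxD]
      by_cases hyA : y ∈ Aset w
      · obtain ⟨j, rfl⟩ := exists_eA hb hyA
        rw [decFun_eA hb j]
        exact lt_trans hxy (eA_lt_eD hb j)
      · rw [decFun_fix hb hyA hyD]
        exact hxy
  · intro x y hxy hx hy
    simp only [dec_apply] at hx hy ⊢
    obtain ⟨i, rfl⟩ := exists_eD ((decFun_lt_iff hb x).mp hx)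
    obtain ⟨j, rfl⟩ := exists_eD ((decFun_lt_iff hb y).mp hy)
    rw [decFun_eD hb i, decFun_eD hb j]
    have hij : i < j := ((Dset w).orderEmbOfFin rfl).strictMono.lt_iff_lt.mp hxy
    exact ((Aset w).orderEmbOfFin (C3 hb)).strictMono hij

def encW {n : ℕ} (π : Equiv.Perm (Fin n)) : Fin n → Bool := fun i => decide (i ≤ π i)

lemma encW_eq_true {π : Equiv.Perm (Fin n)} {i : Fin n} : encW π i = true ↔ i ≤ π i := by
  simp [encW]

lemma encW_eq_false {π : Equiv.Perm (Fin n)} {i : Fin n} : encW π i = false ↔ π i < i := by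
  simp [encW]

lemma encW_dec (hb : Ballot w) : encW (dec w hb) = w := by
  funext i
  by_cases hD : i ∈ Dset w
  · rw [mem_Dset.mp hD]
    rw [encW_eq_false, dec_apply]
    exact (decFun_lt_iff hb i).mpr hD
  · have hT : w i = true := by
      cases hw : w i
      · exact absurd (mem_Dset.mpr hw) hD
      · rfl
    rw [hT, encW_eq_true, dec_apply]
    by_contra hlt
    exact hD ((decFun_lt_iff hb i).mp (not_le.mp hlt))

lemma ballot_encW {π : Equiv.Perm (Fin n)} (hπ : IsInvolution π) : Ballot (encW π) := by
  intro p
  unfold ht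
  have hle : below (Dset (encW π)) p ≤ below (Tset (encW π)) p := by
    unfold below
    apply card_le_card_of_injOn π
    · intro x hx
      rw [mem_coe, mem_filter] at hx
      obtain ⟨hx1, hx2⟩ := hx
      rw [mem_Dset, encW_eq_false] at hx1
      rw [mem_coe, mem_filter]
      refine ⟨mem_Tset.mpr (encW_eq_true.mpr ?_), ?_⟩
      · rw [hπ x]
        exact hx1.le
      · have h1 : (π x).val < x.val := hx1
        exact lt_trans h1 hx2
    · intro a _ b _ hab
      exact π.injective hab
  omega


noncomputable def Aperm (π : Equiv.Perm (Fin n)) : Finset (Fin n) :=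
  univ.filter (fun x => x < π x)
noncomputable def Dperm (π : Equiv.Perm (Fin n)) : Finset (Fin n) :=
  univ.filter (fun x => π x < x)

lemma mem_Aperm {π : Equiv.Perm (Fin n)} {x : Fin n} : x ∈ Aperm π ↔ x < π x := by simp [Aperm]
lemma mem_Dperm {π : Equiv.Perm (Fin n)} {x : Fin n} : x ∈ Dperm π ↔ π x < x := by simp [Dperm]

lemma mapsA {π : Equiv.Perm (Fin n)} (hπi : IsInvolution π) {x : Fin n}
    (hx : x ∈ Aperm π) : π x ∈ Dperm π := by
  rw [mem_Aperm] at hx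
  rw [mem_Dperm, hπi x]
  exact hx

lemma mapsD {π : Equiv.Perm (Fin n)} (hπi : IsInvolution π) {x : Fin n}
    (hx : x ∈ Dperm π) : π x ∈ Aperm π := by
  rw [mem_Dperm] at hx
  rw [mem_Aperm, hπi x]
  exact hx

lemma cardA_eq_cardD {π : Equiv.Perm (Fin n)} (hπi : IsInvolution π) :
    (Aperm π).card = (Dperm π).card := by
  apply card_bij' (fun a _ => π a) (fun d _ => π d)
  · intro a ha
    exact mapsA hπi ha
  · intro d hd
    exact mapsD hπi hd
  · intro a _
    exact hπi a
  · intro d _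
    exact hπi d

lemma strictMonoA {π : Equiv.Perm (Fin n)} (hπi : IsInvolution π) (hπa : Avoids321 π)
    {x y : Fin n} (hx : x ∈ Aperm π) (hy : y ∈ Aperm π) (hxy : x < y) : π x < π y := by
  rw [mem_Aperm] at hx hy
  by_contra hc
  have hne : π y ≠ π x := fun h => absurd (π.injective h) (ne_of_gt hxy)
  have hlt : π y < π x := lt_of_le_of_ne (not_lt.mp hc) hne
  exact hπa ⟨x, y, π y, hxy, hy, by rw [hπi y]; exact hy, hlt⟩

lemma uniq_helper {π σ : Equiv.Perm (Fin n)} (hπi : IsInvolution π)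
    (hσi : IsInvolution σ) (hσa : Avoids321 σ)
    (hw : encW π = encW σ) {u : Fin n} (hu1 : u ∈ Aperm π) (hu2 : u ∉ Aperm σ)
    (hag : ∀ v, u < v → (v ∈ Aperm π ↔ v ∈ Aperm σ)) : False := by
  have hDeq : Dperm π = Dperm σ := by
    ext x
    rw [mem_Dperm, mem_Dperm, ← encW_eq_false, ← encW_eq_false, hw]
  have hσu : σ u = u := by
    have h1 : ¬ (u < σ u) := fun h => hu2 (mem_Aperm.mpr h)
    have h2 : u ≤ σ u := by
      rw [← encW_eq_true, ← hw, encW_eq_true]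
      exact (mem_Aperm.mp hu1).le
    exact le_antisymm (not_lt.mp h1) h2
  -- counts of A's below u
  have hcard : (Aperm π).card = (Aperm σ).card := by
    rw [cardA_eq_cardD hπi, cardA_eq_cardD hσi, hDeq]
  have habove : (Aperm π).filter (fun v => u < v) = (Aperm σ).filter (fun v => u < v) := by
    ext v
    simp only [mem_filter]
    constructor
    · rintro ⟨h1, h2⟩
      exact ⟨(hag v h2).mp h1, h2⟩
    · rintro ⟨h1, h2⟩
      exact ⟨(hag v h2).mpr h1, h2⟩
  have gensplit : ∀ (S : Finset (Fin n)), S.card =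
      (S.filter (fun v => v < u)).card + (S.filter (fun v => u ≤ v)).card := by
    intro S
    rw [← Finset.card_filter_add_card_filter_not (p := fun v => v < u)]
    congr 2
    apply filter_congr
    intro x _
    simp [not_lt]
  have hsplitπ : (Aperm π).card =
      ((Aperm π).filter (fun v => v < u)).card + 1 + ((Aperm π).filter (fun v => u < v)).card := by
    rw [gensplit (Aperm π)]
    have he : (Aperm π).filter (fun v => u ≤ v) = insert u ((Aperm π).filter (fun v => u < v)) := by
      ext x
      simp only [mem_filter, mem_insert]
      constructor
      · rintro ⟨h1, h2⟩
        rcases eq_or_lt_of_le h2 with h | h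
        · exact Or.inl h.symm
        · exact Or.inr ⟨h1, h⟩
      · rintro (rfl | ⟨h1, h2⟩)
        · exact ⟨hu1, le_rfl⟩
        · exact ⟨h1, h2.le⟩
    rw [he, card_insert_of_notMem (by simp)]
    omega
  have hsplitσ : (Aperm σ).card =
      ((Aperm σ).filter (fun v => v < u)).card + ((Aperm σ).filter (fun v => u < v)).card := by
    rw [gensplit (Aperm σ)]
    congr 2
    ext x
    simp only [mem_filter]
    constructor
    · rintro ⟨h1, h2⟩
      rcases eq_or_lt_of_le h2 with h | h
      · exact absurd (h ▸ h1) hu2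
      · exact ⟨h1, h⟩
    · rintro ⟨h1, h2⟩
      exact ⟨h1, h2.le⟩
  set j := ((Aperm π).filter (fun v => v < u)).card with hj
  have hAσcard : ((Aperm σ).filter (fun v => v < u)).card = j + 1 := by
    rw [habove] at hsplitπ
    omega
  -- D below u is small: π maps it into A below u
  have hDle : ((Dperm π).filter (fun v => v < u)).card ≤ j := by
    rw [hj]
    apply card_le_card_of_injOn π
    · intro x hx
      rw [mem_coe, mem_filter] at hx
      obtain ⟨hx1, hx2⟩ := hx
      rw [mem_coe, mem_filter]
      exact ⟨mapsD hπi hx1, lt_trans (mem_Dperm.mp hx1) hx2⟩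
    · intro a _ b _ hab
      exact π.injective hab
  -- find a ∈ Aperm σ with a < u < σ a
  have hex : ∃ a ∈ Aperm σ, a < u ∧ u < σ a := by
    by_contra hc
    push_neg at hc
    have : (Aperm σ).filter (fun v => v < u) ⊆ ((Dperm π).filter (fun v => v < u)).image σ.symm := by
      intro a ha
      rw [mem_filter] at ha
      obtain ⟨ha1, ha2⟩ := ha
      have h3 : σ a ≤ u := hc a ha1 ha2
      have h4 : σ a ≠ u := by
        intro h
        have : a = u := σ.injective (by rw [h, hσu])
        exact absurd (this ▸ ha2) (lt_irrefl u)
      have hσa2 : σ a < u := lt_of_le_of_ne h3 h4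
      rw [mem_image]
      refine ⟨σ a, ?_, ?_⟩
      · rw [mem_filter, hDeq]
        exact ⟨mapsA hσi ha1, hσa2⟩
      · have : σ.symm (σ a) = a := σ.symm_apply_apply a
        exact this
    have hle := card_le_card this
    rw [card_image_of_injective _ σ.symm.injective] at hle
    omega
  obtain ⟨a, ha, hau, hua⟩ := hex
  exact hσa ⟨a, u, σ a, hau, hua, by rw [hσi a, hσu]; exact hau, by rw [hσu]; exact hua⟩

lemma Aperm_eq {π σ : Equiv.Perm (Fin n)} (hπi : IsInvolution π) (hπa : Avoids321 π)
    (hσi : IsInvolution σ) (hσa : Avoids321 σ) (hw : encW π = encW σ) :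
    Aperm π = Aperm σ := by
  by_contra hne
  set S := (Aperm π \ Aperm σ) ∪ (Aperm σ \ Aperm π) with hSdef
  have hSne : S.Nonempty := by
    rcases S.eq_empty_or_nonempty with he | h
    · exfalso
      apply hne
      ext x
      constructor
      · intro hx
        by_contra hx'
        have : x ∈ S := by
          rw [hSdef, mem_union, mem_sdiff, mem_sdiff]
          exact Or.inl ⟨hx, hx'⟩
        rw [he] at this
        exact absurd this (notMem_empty x)
      · intro hx
        by_contra hx'
        have : x ∈ S := by
          rw [hSdef, mem_union, mem_sdiff, mem_sdiff]
          exact Or.inr ⟨hx, hx'⟩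
        rw [he] at this
        exact absurd this (notMem_empty x)
    · exact h
  set u := S.max' hSne with hu
  have humem := S.max'_mem hSne
  have hag : ∀ v, u < v → (v ∈ Aperm π ↔ v ∈ Aperm σ) := by
    intro v hv
    by_contra hiff
    have hvS : v ∈ S := by
      rw [hSdef, mem_union, mem_sdiff, mem_sdiff]
      by_cases h1 : v ∈ Aperm π
      · exact Or.inl ⟨h1, fun h2 => hiff ⟨fun _ => h2, fun _ => h1⟩⟩
      · by_cases h2 : v ∈ Aperm σ
        · exact Or.inr ⟨h2, h1⟩
        · exact absurd ⟨fun h => absurd h h1, fun h => absurd h h2⟩ hiff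
    exact absurd (S.le_max' v hvS) (not_le.mpr hv)
  rcases mem_union.mp humem with hmem | hmem
  · obtain ⟨h1, h2⟩ := mem_sdiff.mp hmem
    exact uniq_helper hπi hσi hσa hw h1 h2 hag
  · obtain ⟨h1, h2⟩ := mem_sdiff.mp hmem
    exact uniq_helper hσi hπi hπa hw.symm h1 h2 (fun v hv => (hag v hv).symm)

lemma perm_unique {π σ : Equiv.Perm (Fin n)} (hπi : IsInvolution π) (hπa : Avoids321 π)
    (hσi : IsInvolution σ) (hσa : Avoids321 σ) (hw : encW π = encW σ) : π = σ := by
  have hA := Aperm_eq hπi hπa hσi hσa hw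
  have hD : Dperm π = Dperm σ := by
    ext x
    rw [mem_Dperm, mem_Dperm, ← encW_eq_false, ← encW_eq_false, hw]
  have hcard : (Aperm π).card = (Dperm π).card := cardA_eq_cardD hπi
  have hFπ : (fun i => π ((Aperm π).orderEmbOfFin hcard i)) = (Dperm π).orderEmbOfFin rfl := by
    apply orderEmbOfFin_unique
    · intro i
      exact mapsA hπi (orderEmbOfFin_mem _ _ i)
    · intro i j hij
      exact strictMonoA hπi hπa (orderEmbOfFin_mem _ _ i) (orderEmbOfFin_mem _ _ j)
        (((Aperm π).orderEmbOfFin hcard).strictMono hij)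
  have hFσ : (fun i => σ ((Aperm π).orderEmbOfFin hcard i)) = (Dperm π).orderEmbOfFin rfl := by
    apply orderEmbOfFin_unique
    · intro i
      have hmem : (Aperm π).orderEmbOfFin hcard i ∈ Aperm σ := hA ▸ orderEmbOfFin_mem _ _ i
      have := mapsA hσi hmem
      rw [← hD] at this
      exact this
    · intro i j hij
      exact strictMonoA hσi hσa (hA ▸ orderEmbOfFin_mem _ _ i) (hA ▸ orderEmbOfFin_mem _ _ j)
        (((Aperm π).orderEmbOfFin hcard).strictMono hij)
  have hAcase : ∀ x ∈ Aperm π, π x = σ x := by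
    intro x hx
    have : x ∈ Set.range ((Aperm π).orderEmbOfFin hcard) := by
      rw [range_orderEmbOfFin]
      exact hx
    obtain ⟨i, rfl⟩ := this
    have e1 := congrFun hFπ i
    have e2 := congrFun hFσ i
    rw [e1, e2]
  apply Equiv.ext
  intro x
  by_cases hx : x ∈ Aperm π
  · exact hAcase x hx
  · by_cases hx' : x ∈ Dperm π
    · have ha : π x ∈ Aperm π := mapsD hπi hx'
      have h1 : π (π x) = σ (π x) := hAcase _ ha
      rw [hπi x] at h1
      have h2 := congrArg σ h1
      rw [hσi (π x)] at h2
      exact h2.symm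
    · have hπx : π x = x := by
        rw [mem_Aperm] at hx
        rw [mem_Dperm] at hx'
        exact le_antisymm (not_lt.mp hx) (not_lt.mp hx')
      have hσx : σ x = x := by
        have hxσ : x ∉ Aperm σ := hA ▸ hx
        have hxσ' : x ∉ Dperm σ := hD ▸ hx'
        rw [mem_Aperm] at hxσ
        rw [mem_Dperm] at hxσ'
        exact le_antisymm (not_lt.mp hxσ) (not_lt.mp hxσ')
      rw [hπx, hσx]

lemma below_insert {u : Fin n} {s : Finset (Fin n)} (hu : u ∉ s) (p : ℕ) :
    below (insert u s) p = below s p + if u.val < p then 1 else 0 := by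
  unfold below
  rw [filter_insert]
  by_cases h : u.val < p
  · rw [if_pos h, if_pos h, card_insert_of_notMem (fun hm => hu (mem_filter.mp hm).1)]
  · rw [if_neg h, if_neg h, add_zero]

lemma Tset_update_true {u : Fin n} (hu : w u = false) :
    Tset (Function.update w u true) = insert u (Tset w) := by
  ext x
  rw [mem_Tset, mem_insert, mem_Tset, Function.update_apply]
  by_cases hx : x = u
  · simp [hx]
  · simp [hx]

lemma Dset_update_true {u : Fin n} (hu : w u = false) :
    Dset (Function.update w u true) = (Dset w).erase u := by
  ext x
  rw [mem_Dset, mem_erase, mem_Dset, Function.update_apply]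
  by_cases hx : x = u
  · simp [hx]
  · simp [hx]

lemma Tset_update_false {u : Fin n} (hu : w u = true) :
    Tset (Function.update w u false) = (Tset w).erase u := by
  ext x
  rw [mem_Tset, mem_erase, mem_Tset, Function.update_apply]
  by_cases hx : x = u
  · simp [hx]
  · simp [hx]

lemma Dset_update_false {u : Fin n} (hu : w u = true) :
    Dset (Function.update w u false) = insert u (Dset w) := by
  ext x
  rw [mem_Dset, mem_insert, mem_Dset, Function.update_apply]
  by_cases hx : x = u
  · simp [hx]
  · simp [hx]

lemma below_erase_add {u : Fin n} {s : Finset (Fin n)} (hu : u ∈ s) (p : ℕ) :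
    below s p = below (s.erase u) p + if u.val < p then 1 else 0 := by
  conv_lhs => rw [← insert_erase hu]
  rw [below_insert (notMem_erase u _)]

lemma ht_update_true {u : Fin n} (hu : w u = false) (p : ℕ) :
    ht (Function.update w u true) p = ht w p + (if u.val < p then 2 else 0) := by
  unfold ht
  rw [Tset_update_true hu, Dset_update_true hu,
    below_insert (by simp [mem_Tset, hu]) p,
    below_erase_add (mem_Dset.mpr hu) p]
  split_ifs with h
  · push_cast
    ring
  · push_cast
    ring

lemma ht_update_false {u : Fin n} (hu : w u = true) (p : ℕ) :
    ht (Function.update w u false) p = ht w p - (if u.val < p then 2 else 0) := by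
  unfold ht
  rw [Tset_update_false hu, Dset_update_false hu,
    below_insert (by simp [mem_Dset, hu]) p,
    below_erase_add (mem_Tset.mpr hu) p]
  split_ifs with h
  · push_cast
    ring
  · push_cast
    ring

lemma update_update_false {u : Fin n} (hu : w u = false) :
    Function.update (Function.update w u true) u false = w := by
  funext x
  by_cases hx : x = u
  · subst hx
    simp [Function.update_apply, hu]
  · simp [Function.update_apply, hx]

lemma update_update_true {u : Fin n} (hu : w u = true) :
    Function.update (Function.update w u false) u true = w := by
  funext x
  by_cases hx : x = u
  · subst hx
    simp [Function.update_apply, hu]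
  · simp [Function.update_apply, hx]

lemma cardT_add_cardD (w : Fin n → Bool) : (Tset w).card + (Dset w).card = n := by
  have h := card_filter_add_card_filter_not (s := (univ : Finset (Fin n)))
    (p := fun i => w i = true)
  have h2 : univ.filter (fun i => ¬ (w i = true)) = Dset w := by
    ext x
    simp only [mem_filter, mem_Dset, mem_univ, true_and]
    cases hw : w x <;> simp
  rw [h2] at h
  simpa [Tset, card_univ] using h

lemma ht_n_eq (w : Fin n → Bool) :
    ht w n = 2 * ((Tset w).card : ℤ) - n := by
  have h1 := cardT_add_cardD w
  have h2 : below (Tset w) n = (Tset w).card := below_of_ge _ le_rfl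
  have h3 : below (Dset w) n = (Dset w).card := below_of_ge _ le_rfl
  unfold ht
  rw [h2, h3]
  omega

def Zcond (w : Fin n → Bool) : Prop := ∃ p, 1 ≤ p ∧ p ≤ n ∧ ht w p ≤ 0

lemma dec_ne_iff (hb : Ballot w) (h0 : 0 < n) :
    dec w hb ⟨0, h0⟩ ≠ ⟨0, h0⟩ ↔ Zcond w := by
  have hx0D : (⟨0, h0⟩ : Fin n) ∉ Dset w := by
    intro hD
    have hw : w ⟨0, h0⟩ = false := mem_Dset.mp hD
    have h1 : ht w 1 = ht w 0 - 1 := ht_succ_false h0 hw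
    have h2 := hb 1
    have h3 : ht w 0 = 0 := ht_zero
    omega
  have hwx0 : w ⟨0, h0⟩ = true := by
    cases hw : w ⟨0, h0⟩
    · exact absurd (mem_Dset.mpr hw) hx0D
    · rfl
  constructor
  · intro hne
    by_cases hA : (⟨0, h0⟩ : Fin n) ∈ Aset w
    · have hnfx := (mem_Aset.mp hA).2
      unfold fixedPt at hnfx
      push_neg at hnfx
      obtain ⟨q, hq1, hq2, hq3⟩ := hnfx hwx0
      refine ⟨q, by omega, hq1, ?_⟩
      have h3 : ht w 0 = 0 := ht_zero
      have hq3' : ht w q ≤ ht w (0 : ℕ) := hq3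
      omega
    · exact absurd (dec_apply hb _ ▸ decFun_fix hb hA hx0D) hne
  · rintro ⟨p, hp1, hp2, hp3⟩
    have hA : (⟨0, h0⟩ : Fin n) ∈ Aset w := by
      rw [mem_Aset]
      refine ⟨hwx0, fun hfx => ?_⟩
      have h4 := hfx.2 p hp2 (by exact hp1)
      have h3 : ht w 0 = 0 := ht_zero
      have h4' : ht w (0 : ℕ) < ht w p := h4
      omega
    obtain ⟨j, hj⟩ := exists_eA hb hA
    have h2 : dec w hb ⟨0, h0⟩ = (Dset w).orderEmbOfFin rfl j := by
      rw [dec_apply, ← hj]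
      exact decFun_eA hb j
    have hlt : (⟨0, h0⟩ : Fin n) < dec w hb ⟨0, h0⟩ := by
      rw [h2, ← hj]
      exact eA_lt_eD hb j
    exact fun h => absurd (h ▸ hlt) (lt_irrefl _)

lemma pi0_ne_iff {π : Equiv.Perm (Fin n)} (hπi : IsInvolution π) (hπa : Avoids321 π)
    (h0 : 0 < n) : π ⟨0, h0⟩ ≠ ⟨0, h0⟩ ↔ Zcond (encW π) := by
  have hb := ballot_encW hπi
  have hdec : dec (encW π) hb = π :=
    perm_unique (dec_isInvolution hb) (dec_avoids hb) hπi hπa (encW_dec hb)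
  have h := dec_ne_iff hb h0
  rw [hdec] at h
  exact h

noncomputable def tm (w : Fin n → Bool) (hz : Zcond w) : ℕ := Nat.find hz

lemma tm_pos {hz : Zcond w} : 1 ≤ tm w hz := (Nat.find_spec hz).1
lemma tm_le {hz : Zcond w} : tm w hz ≤ n := (Nat.find_spec hz).2.1
lemma tm_lt_n {hz : Zcond w} : tm w hz - 1 < n := by
  have h1 : 1 ≤ tm w hz := tm_pos
  have h2 : tm w hz ≤ n := tm_le
  omega

lemma tm_min {hz : Zcond w} {q : ℕ} (h1 : 1 ≤ q) (h2 : q < tm w hz) : 1 ≤ ht w q := by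
  have h3 := Nat.find_min hz h2
  push_neg at h3
  have h4 := h3 h1 (by have := tm_le (hz := hz); omega)
  omega

lemma ht_tm (hb : Ballot w) {hz : Zcond w} : ht w (tm w hz) = 0 :=
  le_antisymm (Nat.find_spec hz).2.2 (hb _)

lemma w_tm_false (hb : Ballot w) {hz : Zcond w} :
    w ⟨tm w hz - 1, tm_lt_n⟩ = false ∧ ht w (tm w hz - 1) = 1 := by
  have h1 : 1 ≤ tm w hz := tm_pos
  have heq : tm w hz - 1 + 1 = tm w hz := by omega
  have hbal := hb (tm w hz - 1)
  have hht := ht_tm hb (hz := hz)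
  cases hw : w ⟨tm w hz - 1, tm_lt_n⟩
  · have h2 := ht_succ_false tm_lt_n hw
    rw [heq] at h2
    exact ⟨rfl, by omega⟩
  · have h2 := ht_succ_true tm_lt_n hw
    rw [heq] at h2
    omega

noncomputable def sm (w : Fin n → Bool) : ℕ := Nat.findGreatest (fun p => ht w p ≤ 1) n

lemma sm_le : sm w ≤ n := Nat.findGreatest_le n

lemma sm_spec : ht w (sm w) ≤ 1 := by
  unfold sm
  exact Nat.findGreatest_spec (P := fun p => ht w p ≤ 1) (m := 0) (Nat.zero_le n)
    (by show ht w 0 ≤ 1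
        rw [ht_zero]
        omega)

lemma sm_gt {q : ℕ} (h1 : sm w < q) (h2 : q ≤ n) : 2 ≤ ht w q := by
  have := Nat.findGreatest_is_greatest (P := fun p => ht w p ≤ 1) h1 h2
  omega

lemma ht_n_ge_two (hn : Even n) (h0 : 0 < n) (hnz : ¬ Zcond w) : 2 ≤ ht w n := by
  unfold Zcond at hnz
  push_neg at hnz
  have h1 := hnz n (by omega) le_rfl
  have h2 := ht_n_eq w
  obtain ⟨m, hm⟩ := hn
  omega

lemma sm_lt_n (hn : Even n) (h0 : 0 < n) (hnz : ¬ Zcond w) : sm w < n := by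
  have h1 := ht_n_ge_two hn h0 hnz
  have h2 := sm_spec (w := w)
  have h3 := sm_le (w := w)
  rcases Nat.lt_or_ge (sm w) n with h | h
  · exact h
  · have : sm w = n := le_antisymm h3 h
    rw [this] at h2
    omega

lemma w_sm_true (hb : Ballot w) (hn : Even n) (h0 : 0 < n) (hnz : ¬ Zcond w) :
    w ⟨sm w, sm_lt_n hn h0 hnz⟩ = true ∧ ht w (sm w) = 1 ∧ ht w (sm w + 1) = 2 := by
  have hlt := sm_lt_n hn h0 hnz
  have h1 : 2 ≤ ht w (sm w + 1) := sm_gt (Nat.lt_succ_self _) hlt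
  have h2 := sm_spec (w := w)
  cases hw : w ⟨sm w, hlt⟩
  · have h3 := ht_succ_false hlt hw
    have h4 := hb (sm w)
    omega
  · have h3 := ht_succ_true hlt hw
    exact ⟨rfl, by omega, by omega⟩

-- forward: flip the false step before the first return to zero
lemma fwd_props (hb : Ballot w) (hz : Zcond w) :
    Ballot (Function.update w ⟨tm w hz - 1, tm_lt_n⟩ true) ∧
    ¬ Zcond (Function.update w ⟨tm w hz - 1, tm_lt_n⟩ true) := by
  obtain ⟨hwf, hht1⟩ := w_tm_false hb (hz := hz)
  have hup : ∀ p, ht (Function.update w ⟨tm w hz - 1, tm_lt_n⟩ true) p =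
      ht w p + (if tm w hz - 1 < p then 2 else 0) := ht_update_true hwf
  constructor
  · intro p
    rw [hup p]
    have := hb p
    split_ifs <;> omega
  · rintro ⟨p, hp1, hp2, hp3⟩
    rw [hup p] at hp3
    by_cases hc : tm w hz - 1 < p
    · rw [if_pos hc] at hp3
      have := hb p
      omega
    · rw [if_neg hc] at hp3
      have hlt : p < tm w hz := by
        have := tm_pos (hz := hz)
        omega
      have := tm_min hp1 hlt
      omega

-- backward: flip the true step after the last visit of level ≤ 1
lemma bwd_props (hb : Ballot w) (hn : Even n) (h0 : 0 < n) (hnz : ¬ Zcond w) :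
    Ballot (Function.update w ⟨sm w, sm_lt_n hn h0 hnz⟩ false) ∧
    Zcond (Function.update w ⟨sm w, sm_lt_n hn h0 hnz⟩ false) := by
  obtain ⟨hwt, hhts, hhts1⟩ := w_sm_true hb hn h0 hnz
  have hup : ∀ p, ht (Function.update w ⟨sm w, sm_lt_n hn h0 hnz⟩ false) p =
      ht w p - (if sm w < p then 2 else 0) := ht_update_false hwt
  constructor
  · intro p
    rw [hup p]
    by_cases hc : sm w < p
    · rw [if_pos hc]
      rcases le_or_gt p n with h | h
      · have := sm_gt hc h
        omega
      · have h2 : ht w p = ht w n := ht_of_ge h.le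
        have h3 := ht_n_ge_two hn h0 hnz
        omega
    · rw [if_neg hc]
      have := hb p
      omega
  · refine ⟨sm w + 1, by omega, by have := sm_lt_n hn h0 hnz; omega, ?_⟩
    rw [hup (sm w + 1), if_pos (Nat.lt_succ_self _)]
    omega

lemma sm_fwd (hb : Ballot w) (hz : Zcond w) :
    sm (Function.update w ⟨tm w hz - 1, tm_lt_n⟩ true) = tm w hz - 1 := by
  obtain ⟨hwf, hht1⟩ := w_tm_false hb (hz := hz)
  have hup := ht_update_true hwf
  unfold sm
  rw [Nat.findGreatest_eq_iff]
  refine ⟨by have := tm_le (hz := hz); omega, fun _ => ?_, fun q hq1 hq2 => ?_⟩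
  · show ht _ (tm w hz - 1) ≤ 1
    rw [hup, if_neg (lt_irrefl _)]
    omega
  · show ¬ ht _ q ≤ 1
    rw [hup, if_pos hq1]
    have := hb q
    omega

lemma tm_bwd (hb : Ballot w) (hn : Even n) (h0 : 0 < n) (hnz : ¬ Zcond w) :
    tm (Function.update w ⟨sm w, sm_lt_n hn h0 hnz⟩ false)
      (bwd_props hb hn h0 hnz).2 = sm w + 1 := by
  obtain ⟨hwt, hhts, hhts1⟩ := w_sm_true hb hn h0 hnz
  have hup := ht_update_false hwt
  unfold tm
  refine (Nat.find_eq_iff _).mpr ?_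
  have hnz' : ∀ p, 1 ≤ p → p ≤ n → 1 ≤ ht w p := by
    unfold Zcond at hnz
    push_neg at hnz
    intro p h1 h2
    have := hnz p h1 h2
    omega
  constructor
  · refine ⟨by omega, by have := sm_lt_n hn h0 hnz; omega, ?_⟩
    rw [hup, if_pos (Nat.lt_succ_self _)]
    omega
  · intro k hk
    rintro ⟨hk1, hk2, hk3⟩
    rw [hup, if_neg (by show ¬ sm w < k; omega)] at hk3
    have := hnz' k hk1 hk2
    omega

noncomputable def flipEquiv (hn : Even n) (h0 : 0 < n) :
    {w : Fin n → Bool // Ballot w ∧ Zcond w} ≃ {w : Fin n → Bool // Ballot w ∧ ¬ Zcond w} where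
  toFun := fun x => ⟨Function.update x.1 ⟨tm x.1 x.2.2 - 1, tm_lt_n⟩ true,
    (fwd_props x.2.1 x.2.2).1, (fwd_props x.2.1 x.2.2).2⟩
  invFun := fun x => ⟨Function.update x.1 ⟨sm x.1, sm_lt_n hn h0 x.2.2⟩ false,
    (bwd_props x.2.1 hn h0 x.2.2).1, (bwd_props x.2.1 hn h0 x.2.2).2⟩
  left_inv := by
    rintro ⟨w, hb, hz⟩
    apply Subtype.ext
    obtain ⟨hwf, _⟩ := w_tm_false hb (hz := hz)
    have hidx : (⟨sm (Function.update w ⟨tm w hz - 1, tm_lt_n⟩ true),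
        sm_lt_n hn h0 (fwd_props hb hz).2⟩ : Fin n) = ⟨tm w hz - 1, tm_lt_n⟩ :=
      Fin.ext (sm_fwd hb hz)
    show Function.update _ _ false = w
    rw [hidx]
    exact update_update_false hwf
  right_inv := by
    rintro ⟨w, hb, hnz⟩
    apply Subtype.ext
    obtain ⟨hwt, _, _⟩ := w_sm_true hb hn h0 hnz
    have hidx : (⟨tm (Function.update w ⟨sm w, sm_lt_n hn h0 hnz⟩ false)
        (bwd_props hb hn h0 hnz).2 - 1, tm_lt_n⟩ : Fin n) = ⟨sm w, sm_lt_n hn h0 hnz⟩ := by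
      apply Fin.ext
      show _ - 1 = sm w
      rw [tm_bwd hb hn h0 hnz]
      omega
    show Function.update _ _ true = w
    rw [hidx]
    exact update_update_true hwt

noncomputable def mainE1 (h0 : 0 < n) :
    {π : Equiv.Perm (Fin n) // IsInvolution π ∧ Avoids321 π ∧ π ⟨0, h0⟩ ≠ ⟨0, h0⟩} ≃
      {w : Fin n → Bool // Ballot w ∧ Zcond w} where
  toFun := fun x => ⟨encW x.1, ballot_encW x.2.1, (pi0_ne_iff x.2.1 x.2.2.1 h0).mp x.2.2.2⟩
  invFun := fun x => ⟨dec x.1 x.2.1, dec_isInvolution x.2.1, dec_avoids x.2.1,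
    (dec_ne_iff x.2.1 h0).mpr x.2.2⟩
  left_inv := by
    rintro ⟨π, h1, h2, h3⟩
    apply Subtype.ext
    exact perm_unique (dec_isInvolution _) (dec_avoids _) h1 h2 (encW_dec (ballot_encW h1))
  right_inv := by
    rintro ⟨w, hb, hz⟩
    exact Subtype.ext (encW_dec hb)

lemma pi0_eq_iff {π : Equiv.Perm (Fin n)} (hπi : IsInvolution π) (hπa : Avoids321 π)
    (h0 : 0 < n) : π ⟨0, h0⟩ = ⟨0, h0⟩ ↔ ¬ Zcond (encW π) := by
  rw [← not_ne_iff (a := π ⟨0, h0⟩)]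
  exact not_congr (pi0_ne_iff hπi hπa h0)

noncomputable def mainE3 (h0 : 0 < n) :
    {π : Equiv.Perm (Fin n) // IsInvolution π ∧ Avoids321 π ∧ π ⟨0, h0⟩ = ⟨0, h0⟩} ≃
      {w : Fin n → Bool // Ballot w ∧ ¬ Zcond w} where
  toFun := fun x => ⟨encW x.1, ballot_encW x.2.1, (pi0_eq_iff x.2.1 x.2.2.1 h0).mp x.2.2.2⟩
  invFun := fun x => ⟨dec x.1 x.2.1, dec_isInvolution x.2.1, dec_avoids x.2.1,
    not_ne_iff.mp (fun hne => x.2.2 ((dec_ne_iff x.2.1 h0).mp hne))⟩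
  left_inv := by
    rintro ⟨π, h1, h2, h3⟩
    apply Subtype.ext
    exact perm_unique (dec_isInvolution _) (dec_avoids _) h1 h2 (encW_dec (ballot_encW h1))
  right_inv := by
    rintro ⟨w, hb, hz⟩
    exact Subtype.ext (encW_dec hb)

end I321

/-- Among 321-avoiding involutions of {1,…,2m}, those not fixing the first point
are equinumerous with those fixing it. -/
theorem card_not_fixing_one_eq_card_fixing_one (m : ℕ) (hm : 1 ≤ m) :
    Nat.card {π : Equiv.Perm (Fin (2 * m)) // IsInvolution π ∧ Avoids321 π ∧
        π ⟨0, by omega⟩ ≠ ⟨0, by omega⟩} =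
      Nat.card {π : Equiv.Perm (Fin (2 * m)) // IsInvolution π ∧ Avoids321 π ∧
        π ⟨0, by omega⟩ = ⟨0, by omega⟩} := by
  have h0 : 0 < 2 * m := by omega
  have hn : Even (2 * m) := ⟨m, by omega⟩
  exact Nat.card_congr ((I321.mainE1 h0).trans ((I321.flipEquiv hn h0).trans (I321.mainE3 h0).symm))
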